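/- For every natural number n ≥ 1 divisible by 10 but not by 100, writing n' = n/10, one has n'^n ≡ (n' + 10)^(n+100) (mod 100). -/
import Mathlib

set_option maxRecDepth 10000

lemma auxA : ∀ x : ZMod 100, (x + 10) ^ 10 = x ^ 10 := by decide
lemma auxB : ∀ x : ZMod 100, x ^ 22 = x ^ 2 := by decide

lemma auxC (x : ZMod 100) (k : ℕ) (hk : 2 ≤ k) : x ^ (k + 20) = x ^ k := by
  obtain ⟨j, rfl⟩ := Nat.exists_eq_add_of_le hk
  have : x ^ (2 + j + 20) = x ^ j * x ^ 22 := by ring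
  rw [this, auxB, ← pow_add]
  ring

theorem stmt9 (n : ℕ) (hn : 1 ≤ n) (h10 : 10 ∣ n) (h100 : ¬ 100 ∣ n) :
    (n / 10) ^ n ≡ (n / 10 + 10) ^ (n + 100) [MOD 100] := by
  obtain ⟨m, rfl⟩ := h10
  have hm : 1 ≤ m := by omega
  rw [Nat.mul_div_cancel_left m (by norm_num)]
  rw [← ZMod.natCast_eq_natCast_iff]
  push_cast
  set x : ZMod 100 := (m : ZMod 100)
  have h1 : (x + 10) ^ (10 * m + 100) = x ^ (10 * m + 100) := by
    have : 10 * m + 100 = 10 * (m + 10) := by ring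
    rw [this, pow_mul, pow_mul, auxA]
  rw [h1]
  have h2 : ∀ i : ℕ, x ^ (10 * m + 20 * i) = x ^ (10 * m) := by
    intro i
    induction i with
    | zero => rfl
    | succ j ih =>
      have : 10 * m + 20 * (j + 1) = (10 * m + 20 * j) + 20 := by ring
      rw [this, auxC _ _ (by omega), ih]
  have := h2 5
  norm_num at this
  rw [this]
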